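/- Let 0 < p < 1 and let f : [a,b] → ℝ be continuous. Suppose that for every x ∈ [a,b] the limit g(x) := lim_{y→x, y>x} (f(y) - f(x))/(y-x)^p exists. Then g(x) = 0 for Lebesgue-almost every x ∈ [a,b]. -/

import Mathlib

open Filter Topology MeasureTheory Set

/-- Points of a set `B ⊆ ℝ` that are isolated on the right within `B` form a countable set. -/
lemma countable_right_isolated (B : Set ℝ) :
    {x ∈ B | ∃ ε > 0, B ∩ Set.Ioo x (x + ε) = ∅}.Countable := by
  set S := {x ∈ B | ∃ ε > 0, B ∩ Set.Ioo x (x + ε) = ∅} with hS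
  have hchoice : ∀ x : S, ∃ q : ℚ, (x : ℝ) < q ∧ B ∩ Set.Ioo (x : ℝ) q = ∅ := by
    rintro ⟨x, hxB, ε, hε, hgap⟩
    obtain ⟨q, hq1, hq2⟩ := exists_rat_btwn (show x < x + ε by linarith)
    refine ⟨q, hq1, Set.eq_empty_iff_forall_notMem.mpr fun y hy => ?_⟩
    exact Set.eq_empty_iff_forall_notMem.mp hgap y ⟨hy.1, hy.2.1, hy.2.2.trans hq2⟩
  choose Q hQ1 hQ2 using hchoice
  have hmonoQ : ∀ x y : S, (x : ℝ) < (y : ℝ) → (Q x : ℝ) < Q y := by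
    intro x y hlt
    have hyB : (y : ℝ) ∈ B := y.2.1
    have hnot : (y : ℝ) ∉ Set.Ioo (x : ℝ) (Q x : ℝ) := fun hc =>
      Set.eq_empty_iff_forall_notMem.mp (hQ2 x) y ⟨hyB, hc⟩
    have hge : (Q x : ℝ) ≤ y := by
      by_contra hlt2
      exact hnot ⟨hlt, not_le.mp hlt2⟩
    exact lt_of_le_of_lt hge (hQ1 y)
  have hinj : Function.Injective Q := by
    intro x y hxy
    rcases lt_trichotomy (x : ℝ) (y : ℝ) with hlt | heq | hgt
    · exact absurd (congrArg (fun q : ℚ => (q : ℝ)) hxy) (ne_of_lt (hmonoQ x y hlt))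
    · exact Subtype.ext heq
    · exact absurd (congrArg (fun q : ℚ => (q : ℝ)) hxy.symm) (ne_of_lt (hmonoQ y x hgt))
  have : Countable S := hinj.countable
  exact Set.countable_coe_iff.mp this

/-- Composed limit: `(y - x) ^ (p - 1) → ∞` as `y → x⁺` when `p < 1`. -/
lemma tendsto_rpow_sub_one_atTop {p x : ℝ} (hp1 : p < 1) :
    Tendsto (fun y : ℝ => (y - x) ^ (p - 1)) (𝓝[>] x) atTop := by
  have h0 : Tendsto (fun y : ℝ => y - x) (𝓝[>] x) (𝓝[>] 0) := by
    apply tendsto_nhdsWithin_of_tendsto_nhds_of_eventually_within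
    · have : Tendsto (fun y : ℝ => y - x) (𝓝 x) (𝓝 (x - x)) :=
        (continuous_id.sub continuous_const).tendsto x
      rw [sub_self] at this
      exact this.mono_left nhdsWithin_le_nhds
    · filter_upwards [self_mem_nhdsWithin] with y hy
      simpa using sub_pos.mpr (Set.mem_Ioi.mp hy)
  have h1 : Tendsto (fun t : ℝ => t ^ (1 - p)) (𝓝[>] (0:ℝ)) (𝓝[>] (0:ℝ)) := by
    apply tendsto_nhdsWithin_of_tendsto_nhds_of_eventually_within
    · have hc : ContinuousAt (fun t : ℝ => t ^ (1 - p)) 0 :=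
        Real.continuousAt_rpow_const 0 (1 - p) (Or.inr (by linarith))
      have := hc.tendsto
      rw [Real.zero_rpow (by linarith : (1:ℝ) - p ≠ 0)] at this
      exact this.mono_left nhdsWithin_le_nhds
    · filter_upwards [self_mem_nhdsWithin] with t ht
      exact Real.rpow_pos_of_pos (Set.mem_Ioi.mp ht) _
  have h2 : Tendsto (fun t : ℝ => (t ^ (1 - p))⁻¹) (𝓝[>] (0:ℝ)) atTop :=
    tendsto_inv_nhdsGT_zero.comp h1
  have h3 : Tendsto (fun t : ℝ => t ^ (p - 1)) (𝓝[>] (0:ℝ)) atTop := by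
    apply h2.congr'
    filter_upwards [self_mem_nhdsWithin] with t ht
    rw [← Real.rpow_neg (le_of_lt (Set.mem_Ioi.mp ht)), neg_sub]
  exact h3.comp h0

/-- Core lemma: a set on which `f` grows at least like `q·(y-x)^p` (with `p<1`, `q>0`)
between any two of its points, with `f` bounded on it, is Lebesgue-null. -/
lemma core_null {p q : ℝ} (hp1 : p < 1) (hq : 0 < q) (f : ℝ → ℝ) (B : Set ℝ)
    (hbdd : BddAbove (f '' B)) (hbdb : BddBelow (f '' B))
    (hmono : ∀ x ∈ B, ∀ y ∈ B, x < y → q * (y - x) ^ p ≤ f y - f x) :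
    volume B = 0 := by
  rcases B.eq_empty_or_nonempty with rfl | hBne
  · simp
  set m := sInf (f '' B) with hm
  have hmle : ∀ x ∈ B, m ≤ f x := fun x hx => csInf_le hbdb ⟨x, hx, rfl⟩
  set F : ℝ → ℝ := fun t => sSup (insert m (f '' (B ∩ Set.Iic t))) with hFdef
  have hsub : ∀ t, insert m (f '' (B ∩ Set.Iic t)) ⊆ insert m (f '' B) := fun t =>
    Set.insert_subset_insert (Set.image_mono Set.inter_subset_left)
  have hbd' : BddAbove (insert m (f '' B)) := hbdd.insert m
  have hFmono : Monotone F := by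
    intro s t hst
    exact csSup_le_csSup (hbd'.mono (hsub t)) (Set.insert_nonempty _ _)
      (Set.insert_subset_insert (Set.image_mono
        (Set.inter_subset_inter_right _ (Set.Iic_subset_Iic.mpr hst))))
  have hfle : ∀ x ∈ B, ∀ y ∈ B, y ≤ x → f y ≤ f x := by
    intro x hx y hy hyx
    rcases eq_or_lt_of_le hyx with rfl | hlt
    · exact le_refl _
    · have h1 := hmono y hy x hx hlt
      have h2 : 0 ≤ q * (x - y) ^ p :=
        mul_nonneg hq.le (Real.rpow_nonneg (by linarith) _)
      linarith
  have hFeq : ∀ x ∈ B, F x = f x := by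
    intro x hx
    apply le_antisymm
    · apply csSup_le (Set.insert_nonempty _ _)
      rintro z (rfl | ⟨y, ⟨hyB, hyx⟩, rfl⟩)
      · exact hmle x hx
      · exact hfle x hx y hyB hyx
    · exact le_csSup (hbd'.mono (hsub x)) (Set.mem_insert_of_mem _ ⟨x, ⟨hx, le_refl x⟩, rfl⟩)
  set S := {x ∈ B | ∃ ε > 0, B ∩ Set.Ioo x (x + ε) = ∅} with hSdef
  have hScount : S.Countable := countable_right_isolated B
  have key : B ⊆ S ∪ {x | ¬ DifferentiableAt ℝ F x} := by
    intro x hx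
    by_cases hdiff : DifferentiableAt ℝ F x
    · left
      refine ⟨hx, ?_⟩
      by_contra hiso
      push_neg at hiso
      set l := 𝓝[>] x ⊓ 𝓟 B with hl
      have hlne : l.NeBot := by
        rw [hl, inf_principal_neBot_iff]
        intro U hU
        obtain ⟨u, hu, hsubU⟩ := mem_nhdsGT_iff_exists_Ioo_subset.mp hU
        have hux : x < u := hu
        obtain ⟨y, hyB, hy1, hy2⟩ := hiso (u - x) (by linarith)
        exact ⟨y, hsubU ⟨hy1, by linarith⟩, hyB⟩
      have hslope : Tendsto (slope F x) l (𝓝 (deriv F x)) := by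
        have := hasDerivAt_iff_tendsto_slope.mp hdiff.hasDerivAt
        exact this.mono_left (le_trans inf_le_left
          (nhdsWithin_mono x (fun y hy => Set.mem_compl_singleton_iff.mpr (ne_of_gt hy))))
      have hbound : ∀ᶠ y in l, q * (y - x) ^ (p - 1) ≤ slope F x y := by
        rw [hl, eventually_inf_principal]
        filter_upwards [self_mem_nhdsWithin] with y hy hyB
        have hxy : x < y := hy
        have hyx0 : (0:ℝ) < y - x := by linarith
        have h1 : q * (y - x) ^ p ≤ f y - f x := hmono x hx y hyB hxy
        have h2 : slope F x y = (f y - f x) / (y - x) := by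
          rw [slope_def_field, hFeq x hx, hFeq y hyB]
        rw [h2, Real.rpow_sub hyx0, Real.rpow_one, ← mul_div_assoc]
        gcongr
      have hatTop : Tendsto (fun y => q * (y - x) ^ (p - 1)) l atTop :=
        ((tendsto_rpow_sub_one_atTop hp1).const_mul_atTop hq).mono_left inf_le_left
      exact not_tendsto_atTop_of_tendsto_nhds hslope
        (tendsto_atTop_mono' l hbound hatTop)
    · right; exact hdiff
  have hD : volume {x | ¬ DifferentiableAt ℝ F x} = 0 := by
    have h := hFmono.ae_differentiableAt
    rw [ae_iff] at h
    exact h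
  exact measure_mono_null key (measure_union_null (hScount.measure_zero volume) hD)

lemma pos_null (p a b : ℝ) (hp0 : 0 < p) (hp1 : p < 1)
    (f g : ℝ → ℝ) (hf : ContinuousOn f (Set.Icc a b))
    (h : ∀ x ∈ Set.Icc a b,
      Tendsto (fun y => (f y - f x) / (y - x) ^ p) (𝓝[>] x) (𝓝 (g x))) :
    volume {x ∈ Set.Icc a b | 0 < g x} = 0 := by
  set L : ℕ → ℝ := fun k => 1 / (2 * (k + 1)) with hL
  have hLpos : ∀ k, 0 < L k := fun k => by positivity
  set A : ℕ → ℕ → ℕ → Set ℝ := fun n k j =>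
    {x ∈ Set.Icc a b | x ∈ Set.Icc (a + j * L k) (a + (j + 1) * L k) ∧
      ∀ y, x < y → y < x + 2 * L k → (1 / (n + 1) : ℝ) * (y - x) ^ p ≤ f y - f x} with hA
  have hbddA : BddAbove (f '' Set.Icc a b) ∧ BddBelow (f '' Set.Icc a b) := by
    have hc : IsCompact (f '' Set.Icc a b) := (isCompact_Icc).image_of_continuousOn hf
    exact ⟨hc.bddAbove, hc.bddBelow⟩
  have hAnull : ∀ n k j, volume (A n k j) = 0 := by
    intro n k j
    refine core_null hp1 (show (0:ℝ) < 1 / (n + 1) by positivity) f _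
      (hbddA.1.mono (Set.image_mono (fun x hx => hx.1)))
      (hbddA.2.mono (Set.image_mono (fun x hx => hx.1))) ?_
    rintro x ⟨hx1, hx2, hx3⟩ y ⟨hy1, hy2, hy3⟩ hxy
    apply hx3 y hxy
    have h1 : a + (j : ℝ) * L k ≤ x := hx2.1
    have h2 : y ≤ a + ((j : ℝ) + 1) * L k := hy2.2
    have h3 : 0 < L k := hLpos k
    nlinarith
  have hcover : {x ∈ Set.Icc a b | 0 < g x} ⊆ ⋃ n, ⋃ k, ⋃ j, A n k j := by
    rintro x ⟨hx, hgx⟩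
    obtain ⟨n, hn⟩ := exists_nat_one_div_lt hgx
    have hev : ∀ᶠ y in 𝓝[>] x, (1 / (n + 1) : ℝ) < (f y - f x) / (y - x) ^ p :=
      (h x hx).eventually (eventually_gt_nhds hn)
    obtain ⟨u, hu, hsubU⟩ := mem_nhdsGT_iff_exists_Ioo_subset.mp hev
    have hux : x < u := hu
    obtain ⟨k, hk⟩ := exists_nat_one_div_lt (show (0:ℝ) < u - x by linarith)
    have h2L : 2 * L k = 1 / (k + 1) := by
      rw [hL]
      field_simp
    set j := ⌊(x - a) / L k⌋₊ with hj
    have hLk := hLpos k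
    have hxa : 0 ≤ (x - a) := by linarith [hx.1]
    have hfl1 : (j : ℝ) * L k ≤ x - a := by
      rw [← le_div_iff₀ hLk]
      exact Nat.floor_le (by positivity)
    have hfl2 : x - a < ((j : ℝ) + 1) * L k := by
      rw [← div_lt_iff₀ hLk]
      exact Nat.lt_floor_add_one _
    refine Set.mem_iUnion.mpr ⟨n, Set.mem_iUnion.mpr ⟨k, Set.mem_iUnion.mpr ⟨j, ?_⟩⟩⟩
    refine ⟨hx, ⟨by linarith, by linarith⟩, ?_⟩
    intro y hxy hyu
    have hyIoo : y ∈ Set.Ioo x u := ⟨hxy, by rw [h2L] at hyu; linarith⟩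
    have hq := hsubU hyIoo
    have hpow : (0:ℝ) < (y - x) ^ p := Real.rpow_pos_of_pos (by linarith) _
    have := (lt_div_iff₀ hpow).mp hq
    linarith
  refine measure_mono_null hcover ?_
  exact measure_iUnion_null fun n => measure_iUnion_null fun k =>
    measure_iUnion_null fun j => hAnull n k j

/-- If `0 < p < 1`, `f` is continuous on `[a,b]`, and the right 'classical' fractional
derivative `g(x) = lim_{y→x⁺} (f(y)-f(x))/(y-x)^p` exists at every point of `[a,b]`, then
`g = 0` Lebesgue-almost everywhere on `[a,b]`. -/
theorem fractional_derivative_ae_zero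
    (p a b : ℝ) (hp0 : 0 < p) (hp1 : p < 1) (hab : a ≤ b)
    (f g : ℝ → ℝ) (hf : ContinuousOn f (Set.Icc a b))
    (h : ∀ x ∈ Set.Icc a b,
      Tendsto (fun y => (f y - f x) / (y - x) ^ p) (𝓝[>] x) (𝓝 (g x))) :
    ∀ᵐ x ∂(volume.restrict (Set.Icc a b)), g x = 0 := by
  have hpos := pos_null p a b hp0 hp1 f g hf h
  have hneg := pos_null p a b hp0 hp1 (-f) (-g) hf.neg (by
    intro x hx
    have := (h x hx).neg
    refine this.congr fun y => ?_
    simp only [Pi.neg_apply]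
    ring)
  rw [ae_iff, Measure.restrict_apply' measurableSet_Icc]
  refine measure_mono_null ?_ (measure_union_null hpos hneg)
  rintro x ⟨hgx, hx⟩
  rcases lt_or_gt_of_ne (show g x ≠ 0 from hgx) with hlt | hgt
  · right
    exact ⟨hx, by simp [Pi.neg_apply]; linarith⟩
  · left
    exact ⟨hx, hgt⟩
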